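/- If x and y are n-dimensional random vectors sampled independently from a continuous distribution (absolutely continuous with respect to Lebesgue measure on R^{2n}), and Tanh is applied entrywise to the n×2 matrix [x, y], then with probability 1 the rank of Tanh([x,y]) equals the rank of [x,y]. -/

import Mathlib

open MeasureTheory

lemma aux_tanh_inj : Function.Injective Real.tanh := by
  intro a b h
  rw [Real.tanh_eq_sinh_div_cosh, Real.tanh_eq_sinh_div_cosh,
    div_eq_div_iff (Real.cosh_pos a).ne' (Real.cosh_pos b).ne'] at h
  have hs : Real.sinh (a - b) = 0 := by rw [Real.sinh_sub]; linarith
  have := Real.sinh_eq_zero.mp hs; linarith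

lemma aux_tanh_cont : Continuous Real.tanh := by
  have : Real.tanh = fun x => Real.sinh x / Real.cosh x :=
    funext fun x => Real.tanh_eq_sinh_div_cosh x
  rw [this]
  exact Real.continuous_sinh.div Real.continuous_cosh fun x => (Real.cosh_pos x).ne'

lemma aux_rank_two {n : ℕ} (M : Matrix (Fin n) (Fin 2) ℝ) (i j : Fin n)
    (h : M i 0 * M j 1 - M i 1 * M j 0 ≠ 0) : M.rank = 2 := by
  have hli : LinearIndependent ℝ M.col := by
    rw [Fintype.linearIndependent_iff]
    intro g hg k
    have hi := congrFun hg i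
    have hj := congrFun hg j
    simp only [Finset.sum_apply, Pi.smul_apply, Matrix.col_apply, smul_eq_mul,
      Fin.sum_univ_two, Pi.zero_apply] at hi hj
    have h0 : g 0 * (M i 0 * M j 1 - M i 1 * M j 0) = 0 := by
      linear_combination M j 1 * hi - M i 1 * hj
    have h1 : g 1 * (M i 0 * M j 1 - M i 1 * M j 0) = 0 := by
      linear_combination -(M j 0) * hi + M i 0 * hj
    fin_cases k
    · exact (mul_eq_zero.mp h0).resolve_right h
    · exact (mul_eq_zero.mp h1).resolve_right h
  rw [Matrix.rank_eq_finrank_span_cols, finrank_span_eq_card hli, Fintype.card_fin]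

lemma aux_rank_one (M : Matrix (Fin 1) (Fin 2) ℝ) (hM : M ≠ 0) : M.rank = 1 := by
  refine le_antisymm (by simpa using M.rank_le_card_height) ?_
  rw [Nat.one_le_iff_ne_zero]
  intro h
  apply hM
  rw [Matrix.rank_eq_finrank_span_cols] at h
  have hb := Submodule.finrank_eq_zero.mp h
  rw [Submodule.span_eq_bot] at hb
  ext a b
  have := hb (M.transpose b) ⟨b, rfl⟩
  exact congrFun this a

lemma aux_null_set {m : ℕ} (f : ℝ → ℝ) (hf : Measurable f) (hinj : Function.Injective f)
    (h0 : f 0 = 0) :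
    volume {p : (Fin (m+2) → ℝ) × (Fin (m+2) → ℝ) |
      f (p.1 0) * f (p.2 1) = f (p.1 1) * f (p.2 0)} = 0 := by
  have hS : MeasurableSet {p : (Fin (m+2) → ℝ) × (Fin (m+2) → ℝ) |
      f (p.1 0) * f (p.2 1) = f (p.1 1) * f (p.2 0)} := by
    apply measurableSet_eq_fun
    · exact ((hf.comp ((measurable_pi_apply 0).comp measurable_fst)).mul
        (hf.comp ((measurable_pi_apply 1).comp measurable_snd)))
    · exact ((hf.comp ((measurable_pi_apply 1).comp measurable_fst)).mul
        (hf.comp ((measurable_pi_apply 0).comp measurable_snd)))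
  rw [Measure.volume_eq_prod, Measure.measure_prod_null hS]
  have ha0 : ∀ᵐ a : Fin (m+2) → ℝ ∂volume, a 0 ≠ (0:ℝ) := by
    rw [volume_pi]; exact Measure.ae_eval_ne _ 0 0
  have ha1 : ∀ᵐ a : Fin (m+2) → ℝ ∂volume, a 1 ≠ (0:ℝ) := by
    rw [volume_pi]; exact Measure.ae_eval_ne _ 1 0
  filter_upwards [ha0, ha1] with a h00 h11
  simp only [Pi.zero_apply]
  have hfa0 : f (a 0) ≠ 0 := fun h => h00 (hinj (h.trans h0.symm))
  have hfa1 : f (a 1) ≠ 0 := fun h => h11 (hinj (h.trans h0.symm))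
  have key : (volume : Measure (Fin (m+2) → ℝ))
      {b | f (a 0) * f (b 1) = f (a 1) * f (b 0)} = 0 := by
    set e := MeasurableEquiv.piFinSuccAbove (fun _ : Fin (m+2) => ℝ) 1 with he
    have hmp := measurePreserving_piFinSuccAbove (fun _ : Fin (m+2) => (volume : Measure ℝ)) 1
    set T : Set (ℝ × (Fin (m+1) → ℝ)) :=
      {q | f (a 0) * f q.1 = f (a 1) * f (q.2 0)} with hT
    have hTmeas : MeasurableSet T := by
      apply measurableSet_eq_fun
      · exact (measurable_const.mul (hf.comp measurable_fst))
      · exact (measurable_const.mul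
          (hf.comp ((measurable_pi_apply 0).comp measurable_snd)))
    have hset : {b : Fin (m+2) → ℝ | f (a 0) * f (b 1) = f (a 1) * f (b 0)} = e ⁻¹' T := by
      ext b
      exact Iff.rfl
    rw [volume_pi, hset, hmp.measure_preimage hTmeas.nullMeasurableSet]
    rw [Measure.measure_prod_null hTmeas]
    refine ae_of_all _ fun t => ?_
    show (Measure.pi fun _ => (volume : Measure ℝ)) (Prod.mk t ⁻¹' T) = 0
    by_cases hex : ∃ s, f (a 0) * f t = f (a 1) * f s
    · obtain ⟨s, hs⟩ := hex
      refine measure_mono_null (fun r hr => ?_)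
        (Measure.pi_hyperplane (fun _ => (volume : Measure ℝ)) 0 s)
      have : f (a 1) * f (r 0) = f (a 1) * f s := by
        simp only [Set.mem_preimage, hT, Set.mem_setOf_eq] at hr
        linarith [hr, hs]
      exact hinj (mul_left_cancel₀ hfa1 this)
    · have : (Prod.mk t ⁻¹' T) = ∅ := by
        ext r; simp only [Set.mem_preimage, hT, Set.mem_setOf_eq, Set.mem_empty_iff_false,
          iff_false]
        exact fun hc => hex ⟨r 0, hc⟩
      rw [this, measure_empty]
  exact key

/-- If `x` and `y` are `n`-dimensional random vectors whose joint law is absolutely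
continuous with respect to Lebesgue measure on `ℝ^{2n}`, then applying `tanh`
entrywise to the `n × 2` matrix `[x, y]` almost surely preserves its rank. -/
theorem stmt0 {n : ℕ} {Ω : Type*} [MeasurableSpace Ω] (μ : Measure Ω)
    [IsProbabilityMeasure μ] (x y : Ω → (Fin n → ℝ))
    (hmeas : Measurable fun ω => (x ω, y ω))
    (habs : μ.map (fun ω => (x ω, y ω)) ≪
      (volume : Measure ((Fin n → ℝ) × (Fin n → ℝ)))) :
    ∀ᵐ ω ∂μ,
      ((Matrix.of fun i (j : Fin 2) => ![x ω, y ω] j i).map Real.tanh).rank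
        = (Matrix.of fun i (j : Fin 2) => ![x ω, y ω] j i).rank := by
  obtain _ | _ | m := n
  · refine ae_of_all _ fun ω => ?_
    have hz : ∀ (A : Matrix (Fin 0) (Fin 2) ℝ), A.rank = 0 := fun A =>
      Nat.le_zero.mp (by simpa using A.rank_le_card_height)
    rw [hz, hz]
  · refine ae_of_all _ fun ω => ?_
    set M : Matrix (Fin 1) (Fin 2) ℝ := Matrix.of fun i (j : Fin 2) => ![x ω, y ω] j i with hMdef
    by_cases hM : M = 0
    · rw [hM, Matrix.map_zero _ Real.tanh_zero]
    · have hmap : M.map Real.tanh ≠ 0 := by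
        intro h
        apply hM
        ext a b
        have := congrFun (congrFun h a) b
        simp only [Matrix.map_apply, Matrix.zero_apply] at this ⊢
        exact aux_tanh_inj (this.trans Real.tanh_zero.symm)
      rw [aux_rank_one _ hmap, aux_rank_one _ hM]
  · have hN1 : volume {p : (Fin (m+2) → ℝ) × (Fin (m+2) → ℝ) |
        p.1 0 * p.2 1 = p.1 1 * p.2 0} = 0 :=
      aux_null_set id measurable_id (fun _ _ h => h) rfl
    have hN2 : volume {p : (Fin (m+2) → ℝ) × (Fin (m+2) → ℝ) |
        Real.tanh (p.1 0) * Real.tanh (p.2 1) = Real.tanh (p.1 1) * Real.tanh (p.2 0)} = 0 :=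
      aux_null_set Real.tanh aux_tanh_cont.measurable aux_tanh_inj Real.tanh_zero
    have w1 : ∀ᵐ ω ∂μ, ¬ (x ω 0 * y ω 1 = x ω 1 * y ω 0) :=
      ae_of_ae_map (p := fun q : (Fin (m+2) → ℝ) × (Fin (m+2) → ℝ) =>
          ¬ (q.1 0 * q.2 1 = q.1 1 * q.2 0))
        hmeas.aemeasurable (compl_mem_ae_iff.mpr (habs hN1))
    have w2 : ∀ᵐ ω ∂μ,
        ¬ (Real.tanh (x ω 0) * Real.tanh (y ω 1)
          = Real.tanh (x ω 1) * Real.tanh (y ω 0)) :=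
      ae_of_ae_map (p := fun q : (Fin (m+2) → ℝ) × (Fin (m+2) → ℝ) =>
          ¬ (Real.tanh (q.1 0) * Real.tanh (q.2 1) = Real.tanh (q.1 1) * Real.tanh (q.2 0)))
        hmeas.aemeasurable (compl_mem_ae_iff.mpr (habs hN2))
    filter_upwards [w1, w2] with ω h1 h2
    set M : Matrix (Fin (m+2)) (Fin 2) ℝ := Matrix.of fun i (j : Fin 2) => ![x ω, y ω] j i
      with hMdef
    have hminor : M 0 0 * M 1 1 - M 0 1 * M 1 0 ≠ 0 := by
      have : M 0 0 = x ω 0 := rfl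
      have : M 1 1 = y ω 1 := rfl
      refine sub_ne_zero_of_ne fun hc => h1 ?_
      show x ω 0 * y ω 1 = x ω 1 * y ω 0
      have hc' : x ω 0 * y ω 1 = y ω 0 * x ω 1 := hc
      linear_combination hc'
    have htminor : (M.map Real.tanh) 0 0 * (M.map Real.tanh) 1 1
        - (M.map Real.tanh) 0 1 * (M.map Real.tanh) 1 0 ≠ 0 := by
      refine sub_ne_zero_of_ne fun hc => h2 ?_
      show Real.tanh (x ω 0) * Real.tanh (y ω 1) = Real.tanh (x ω 1) * Real.tanh (y ω 0)
      have hc' : Real.tanh (x ω 0) * Real.tanh (y ω 1)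
          = Real.tanh (y ω 0) * Real.tanh (x ω 1) := hc
      linear_combination hc'
    rw [aux_rank_two (M.map Real.tanh) 0 1 htminor, aux_rank_two M 0 1 hminor]
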